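/- The function g₁ is convex on the interval [0, 2): for all V₁, V₂ ∈ [0, 2) and all t ∈ [0, 1], g₁(t·V₁ + (1−t)·V₂) ≤ t·g₁(V₁) + (1−t)·g₁(V₂). -/

import Mathlib

open Real

/-- First branch of Gupta et al.'s helper function `f`. -/
noncomputable def g1 (V : ℝ) : ℝ := Real.log ((2 + V) / (2 - V)) - 2 * V / (2 + V)

noncomputable def g1d (V : ℝ) : ℝ := 1/(2+V) + 1/(2-V) - 4/(2+V)^2

noncomputable def g1dd (V : ℝ) : ℝ := -(1/(2+V)^2) + 1/(2-V)^2 + 8/(2+V)^3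

lemma hasDerivAt_g1 {x : ℝ} (h1 : -2 < x) (h2 : x < 2) : HasDerivAt g1 (g1d x) x := by
  have ha : (2:ℝ) + x ≠ 0 := by linarith
  have hb : (2:ℝ) - x ≠ 0 := by linarith
  have d1 : HasDerivAt (fun V : ℝ => Real.log (2 + V)) (1/(2+x)) x := by
    have := (Real.hasDerivAt_log ha).comp x ((hasDerivAt_id x).const_add 2)
    refine this.congr_deriv ?_
    simp [one_div]
  have d2 : HasDerivAt (fun V : ℝ => Real.log (2 - V)) (-(1/(2-x))) x := by
    have hinner : HasDerivAt (fun V : ℝ => 2 - V) (-1) x := by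
      simpa using (hasDerivAt_id x).const_sub 2
    have := (Real.hasDerivAt_log hb).comp x hinner
    simp only [Function.comp_def] at this
    refine this.congr_deriv ?_
    field_simp
  have d3 : HasDerivAt (fun V : ℝ => 2 * V / (2 + V)) (4/(2+x)^2) x := by
    have hn : HasDerivAt (fun V : ℝ => 2 * V) 2 x := by
      simpa using (hasDerivAt_id x).const_mul 2
    have hd : HasDerivAt (fun V : ℝ => 2 + V) 1 x := (hasDerivAt_id x).const_add 2
    have := hn.div hd ha
    refine this.congr_deriv ?_
    field_simp
    ring
  have key : HasDerivAt (fun V : ℝ => Real.log (2 + V) - Real.log (2 - V) - 2 * V / (2 + V))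
      (g1d x) x := by
    have := (d1.sub d2).sub d3
    refine this.congr_deriv ?_
    unfold g1d
    ring
  refine key.congr_of_eventuallyEq ?_
  have hopen : IsOpen {V : ℝ | -2 < V ∧ V < 2} := by
    have : {V : ℝ | -2 < V ∧ V < 2} = Set.Ioo (-2) 2 := rfl
    rw [this]; exact isOpen_Ioo
  filter_upwards [hopen.mem_nhds ⟨h1, h2⟩] with V hV
  have ha' : (2:ℝ) + V ≠ 0 := by have := hV.1; linarith
  have hb' : (2:ℝ) - V ≠ 0 := by have := hV.2; linarith
  unfold g1
  rw [Real.log_div ha' hb']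

lemma hasDerivAt_g1d {x : ℝ} (h1 : -2 < x) (h2 : x < 2) : HasDerivAt g1d (g1dd x) x := by
  have ha : (2:ℝ) + x ≠ 0 := by linarith
  have hb : (2:ℝ) - x ≠ 0 := by linarith
  have hd : HasDerivAt (fun V : ℝ => 2 + V) 1 x := (hasDerivAt_id x).const_add 2
  have hd2 : HasDerivAt (fun V : ℝ => 2 - V) (-1) x := by
    simpa using (hasDerivAt_id x).const_sub 2
  have d1 : HasDerivAt (fun V : ℝ => 1/(2+V)) (-(1/(2+x)^2)) x := by
    have := (hasDerivAt_const x (1:ℝ)).div hd ha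
    refine this.congr_deriv ?_
    field_simp
    ring
  have d2 : HasDerivAt (fun V : ℝ => 1/(2-V)) (1/(2-x)^2) x := by
    have := (hasDerivAt_const x (1:ℝ)).div hd2 hb
    refine this.congr_deriv ?_
    field_simp
    ring
  have d3 : HasDerivAt (fun V : ℝ => 4/(2+V)^2) (-(8/(2+x)^3)) x := by
    have hpow : HasDerivAt (fun V : ℝ => (2+V)^2) (2 * (2+x)^1 * 1) x := hd.pow 2
    have hpn : ((2:ℝ)+x)^2 ≠ 0 := pow_ne_zero 2 ha
    have := (hasDerivAt_const x (4:ℝ)).div hpow hpn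
    refine this.congr_deriv ?_
    field_simp
    ring
  have := (d1.add d2).sub d3
  refine this.congr_deriv ?_
  unfold g1dd
  ring

theorem g1_convexOn :
    ∀ V₁ V₂ : ℝ, 0 ≤ V₁ → V₁ < 2 → 0 ≤ V₂ → V₂ < 2 →
      ∀ t : ℝ, 0 ≤ t → t ≤ 1 →
        g1 (t * V₁ + (1 - t) * V₂) ≤ t * g1 V₁ + (1 - t) * g1 V₂ := by
  have hint : interior (Set.Ico (0:ℝ) 2) = Set.Ioo 0 2 := interior_Ico
  have hconv : ConvexOn ℝ (Set.Ico (0:ℝ) 2) g1 := by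
    apply convexOn_of_hasDerivWithinAt2_nonneg (f' := g1d) (f'' := g1dd) (convex_Ico 0 2)
    · intro x hx
      exact ((hasDerivAt_g1 (by linarith [hx.1]) hx.2).differentiableAt).continuousAt.continuousWithinAt
    · intro x hx
      rw [hint] at hx
      exact (hasDerivAt_g1 (by linarith [hx.1]) hx.2).hasDerivWithinAt
    · intro x hx
      rw [hint] at hx
      exact (hasDerivAt_g1d (by linarith [hx.1]) hx.2).hasDerivWithinAt
    · intro x hx
      rw [hint] at hx
      obtain ⟨hx0, hx2⟩ := hx
      unfold g1dd
      have ha : (0:ℝ) < 2 + x := by linarith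
      have hb : (0:ℝ) < 2 - x := by linarith
      have h1 : 1/(2+x)^2 ≤ 1/(2-x)^2 := by
        apply one_div_le_one_div_of_le (by positivity)
        nlinarith
      have h2 : (0:ℝ) < 8/(2+x)^3 := by positivity
      linarith
  intro V₁ V₂ h1 h2 h3 h4 t ht ht1
  have := hconv.2 (Set.mem_Ico.2 ⟨h1, h2⟩) (Set.mem_Ico.2 ⟨h3, h4⟩) ht (by linarith : (0:ℝ) ≤ 1 - t) (by ring)
  simpa using this
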